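/- Suppose (X, δ) is a diversity with δ(A) = f(|A| − 1) for all nonempty finite A ⊆ X, where X is infinite or |X| ≥ j + k + 1. Then f satisfies: f(0) = 0, f(j) > 0 for j > 0, f is non-decreasing, and f(j + k) ≤ f(j) + f(k) for all j, k ≥ 0 with j + k < |X|. -/

import Mathlib

/-- If `(X,δ)` is a symmetric diversity with `δ(A) = f(|A|−1)` for nonempty `A`,
then `f` satisfies (S1)–(S3). -/
theorem stmt_3 {X : Type*} [DecidableEq X] [Fintype X] [Nonempty X]
    (f : ℕ → ℝ) (δ : Finset X → ℝ)
    (hpos : ∀ A : Finset X, 0 ≤ δ A)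
    (hzero : ∀ A : Finset X, δ A = 0 ↔ A.card ≤ 1)
    (htri : ∀ A B C : Finset X, B.Nonempty → δ (A ∪ C) ≤ δ (A ∪ B) + δ (B ∪ C))
    (hδ : ∀ A : Finset X, A.Nonempty → δ A = f (A.card - 1)) :
    f 0 = 0 ∧
    (∀ j, 0 < j → j < Fintype.card X → 0 < f j) ∧
    (∀ j k, j ≤ k → k < Fintype.card X → f j ≤ f k) ∧
    (∀ j k, j + k < Fintype.card X → f (j + k) ≤ f j + f k) := by
  -- existence of subsets of any card ≤ |X|
  have hex : ∀ n : ℕ, n ≤ Fintype.card X → ∃ A : Finset X, A.card = n := by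
    intro n hn
    obtain ⟨A, _, hA⟩ := Finset.exists_subset_card_eq (s := (Finset.univ : Finset X)) (n := n)
      (by simpa using hn)
    exact ⟨A, hA⟩
  have hsingle : ∀ b : X, δ {b} = 0 := fun b => (hzero {b}).2 (by simp)
  -- δ A ≤ δ (insert b A)
  have hins : ∀ (A : Finset X) (b : X), δ A ≤ δ (insert b A) := by
    intro A b
    have := htri A {b} ∅ (by simp)
    rw [Finset.union_empty, Finset.union_empty, hsingle b, add_zero, Finset.union_comm, ← Finset.insert_eq] at this
    exact this
  -- monotonicity of δ
  have hmono : ∀ (n : ℕ) (A C : Finset X), A ⊆ C → C.card ≤ A.card + n → δ A ≤ δ C := by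
    intro n
    induction n with
    | zero =>
      intro A C hsub hcard
      have : A = C := Finset.eq_of_subset_of_card_le hsub (by omega)
      simp [this]
    | succ n ih =>
      intro A C hsub hcard
      by_cases h : A = C
      · simp [h]
      · obtain ⟨b, hbC, hbA⟩ := Finset.exists_of_ssubset (hsub.ssubset_of_ne h)
        have h1 : insert b A ⊆ C := Finset.insert_subset hbC hsub
        have h2 : (insert b A).card = A.card + 1 := Finset.card_insert_of_notMem hbA
        exact le_trans (hins A b) (ih (insert b A) C h1 (by omega))
  have hmono' : ∀ A C : Finset X, A ⊆ C → δ A ≤ δ C := fun A C h =>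
    hmono C.card A C h (by omega)
  refine ⟨?_, ?_, ?_, ?_⟩
  · obtain ⟨x⟩ := ‹Nonempty X›
    have h1 := hδ {x} (by simp)
    have h2 := (hzero {x}).2 (by simp)
    simp at h1
    rw [h1] at h2
    exact h2
  · intro j hj hjcard
    obtain ⟨A, hA⟩ := hex (j + 1) (by omega)
    have hne : A.Nonempty := Finset.card_pos.1 (by omega)
    have h1 := hδ A hne
    rw [hA] at h1
    simp at h1
    have h2 : δ A ≠ 0 := fun h => by
      have := (hzero A).1 h; omega
    have := lt_of_le_of_ne (hpos A) (Ne.symm h2)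
    rwa [h1] at this
  · intro j k hjk hk
    obtain ⟨C, hC⟩ := hex (k + 1) (by omega)
    obtain ⟨A, hAC, hA⟩ := Finset.exists_subset_card_eq (s := C) (n := j + 1) (by omega)
    have hAne : A.Nonempty := Finset.card_pos.1 (by omega)
    have hCne : C.Nonempty := Finset.card_pos.1 (by omega)
    have h1 := hδ A hAne
    have h2 := hδ C hCne
    rw [hA] at h1
    rw [hC] at h2
    simp at h1 h2
    have := hmono' A C hAC
    rwa [h1, h2] at this
  · intro j k hjk
    obtain ⟨S, hS⟩ := hex (j + k + 1) (by omega)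
    obtain ⟨A, hAS, hA⟩ := Finset.exists_subset_card_eq (s := S) (n := j + 1) (by omega)
    have hAne : A.Nonempty := Finset.card_pos.1 (by omega)
    obtain ⟨b, hbA⟩ := hAne
    set C : Finset X := insert b (S \ A) with hCdef
    have hbS : b ∈ S := hAS hbA
    have hbnot : b ∉ S \ A := by simp [hbA]
    have hCcard : C.card = k + 1 := by
      rw [hCdef, Finset.card_insert_of_notMem hbnot, Finset.card_sdiff_of_subset hAS]
      omega
    have hCne : C.Nonempty := ⟨b, Finset.mem_insert_self _ _⟩
    have hunion : A ∪ C = S := by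
      apply Finset.Subset.antisymm
      · apply Finset.union_subset hAS
        rw [hCdef]
        exact Finset.insert_subset hbS (Finset.sdiff_subset)
      · intro x hx
        by_cases h : x ∈ A
        · exact Finset.mem_union_left _ h
        · exact Finset.mem_union_right _ (by simp [hCdef, hx, h])
    have hAb : A ∪ {b} = A := by
      rw [Finset.union_comm]
      rw [← Finset.insert_eq]
      exact Finset.insert_eq_self.2 hbA
    have hbC : ({b} : Finset X) ∪ C = C := by
      rw [← Finset.insert_eq]
      exact Finset.insert_eq_self.2 (Finset.mem_insert_self b _)
    have htri' := htri A {b} C (by simp)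
    rw [hunion, hAb, hbC] at htri'
    have h1 := hδ A ⟨b, hbA⟩
    have h2 := hδ C hCne
    have h3 := hδ S (Finset.card_pos.1 (by omega))
    rw [hA] at h1
    rw [hCcard] at h2
    rw [hS] at h3
    simp at h1 h2 h3
    rw [h1, h2, h3] at htri'
    exact htri'
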